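/- Let Q be an n-element set, let M_1,...,M_ℓ be a sequence of m-element subsets of Q (for some 1 < m ≤ n), and let R_1,...,R_ℓ be a sequence of 2-element subsets of Q such that R_i ⊆ M_i for all 1 ≤ i ≤ ℓ, and R_i ⊄ M_j whenever 1 ≤ j < i ≤ ℓ. Then ℓ ≤ (n-m+2)(n-m+1)/2. -/

import Mathlib

set_option maxHeartbeats 1000000

open Matrix Finset

private lemma my_updateRow_comm {m' n' α : Type*} [DecidableEq m'] (A : Matrix m' n' α)
    {i j : m'} (hij : i ≠ j) (x y : n' → α) :
    (A.updateRow i x).updateRow j y = (A.updateRow j y).updateRow i x := by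
  funext p q
  by_cases hp : p = j <;> by_cases hp' : p = i <;>
    simp_all [Matrix.updateRow_apply]

private lemma det_updateRow_pi {N : ℕ} (M : Matrix (Fin N) (Fin N) ℝ) (i : Fin N)
    (x : Fin N → ℝ) :
    (M.updateRow i x).det = ∑ p, x p * (M.updateRow i (Pi.single p 1)).det := by
  let L : (Fin N → ℝ) →ₗ[ℝ] ℝ :=
    { toFun := fun r => (M.updateRow i r).det
      map_add' := fun u v => Matrix.det_updateRow_add M i u v
      map_smul' := fun s u => Matrix.det_updateRow_smul M i s u }
  have hx : x = ∑ p, x p • (Pi.single p (1 : ℝ) : Fin N → ℝ) := by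
    funext j
    simp [Finset.sum_apply, Pi.single_apply]
  have : L x = ∑ p, x p * L (Pi.single p 1) := by
    conv_lhs => rw [hx]
    rw [map_sum]
    simp [L]
  simpa [L] using this

private lemma det_two_row_expand {N : ℕ} (B : Matrix (Fin N) (Fin N) ℝ) {p0 p1 : Fin N}
    (hne : p0 ≠ p1) (x y : Fin N → ℝ) :
    ((B.updateRow p0 x).updateRow p1 y).det
      = ∑ p, ∑ q, x p * y q *
          ((B.updateRow p0 (Pi.single p 1)).updateRow p1 (Pi.single q 1)).det := by
  rw [det_updateRow_pi ((B.updateRow p0 x)) p1 y]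
  have key : ∀ q, ((B.updateRow p0 x).updateRow p1 (Pi.single q 1)).det
      = ∑ p, x p * ((B.updateRow p0 (Pi.single p 1)).updateRow p1 (Pi.single q 1)).det := by
    intro q
    rw [my_updateRow_comm B hne, det_updateRow_pi]
    refine Finset.sum_congr rfl fun p _ => ?_
    rw [my_updateRow_comm B hne.symm]
  simp_rw [key, Finset.mul_sum]
  rw [Finset.sum_comm]
  refine Finset.sum_congr rfl fun p _ => Finset.sum_congr rfl fun q _ => by ring

private lemma det_two_row_swap {N : ℕ} (B : Matrix (Fin N) (Fin N) ℝ) {p0 p1 : Fin N}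
    (hne : p0 ≠ p1) (x y : Fin N → ℝ) :
    ((B.updateRow p0 y).updateRow p1 x).det = - ((B.updateRow p0 x).updateRow p1 y).det := by
  have h : (B.updateRow p0 y).updateRow p1 x
      = ((B.updateRow p0 x).updateRow p1 y).submatrix (Equiv.swap p0 p1) id := by
    funext p q
    rcases eq_or_ne p p0 with rfl | h0
    · simp [Matrix.submatrix_apply, Equiv.swap_apply_left, Matrix.updateRow_apply, hne,
        hne.symm]
    · rcases eq_or_ne p p1 with rfl | h1
      · simp [Matrix.submatrix_apply, Equiv.swap_apply_right, Matrix.updateRow_apply, hne,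
          hne.symm]
      · simp [Matrix.submatrix_apply, Equiv.swap_apply_of_ne_of_ne h0 h1,
          Matrix.updateRow_apply, h0, h1]
  rw [h, Matrix.det_permute, Equiv.Perm.sign_swap hne]
  simp

private lemma det_two_row_diag {N : ℕ} (B : Matrix (Fin N) (Fin N) ℝ) {p0 p1 : Fin N}
    (hne : p0 ≠ p1) (x : Fin N → ℝ) :
    ((B.updateRow p0 x).updateRow p1 x).det = 0 := by
  refine Matrix.det_zero_of_row_eq hne ?_
  simp [Matrix.updateRow_apply, hne, hne.symm]

private lemma sum_fold_antisym {N : ℕ} (D : Fin N → Fin N → ℝ)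
    (hdiag : ∀ p, D p p = 0) (hskew : ∀ p q, D q p = - D p q) (x y : Fin N → ℝ) :
    ∑ p, ∑ q, x p * y q * D p q
      = ∑ z ∈ Finset.univ.filter (fun z : Fin N × Fin N => z.1 < z.2),
          (x z.1 * y z.2 - x z.2 * y z.1) * D z.1 z.2 := by
  classical
  have h1 : ∑ p, ∑ q, x p * y q * D p q
      = ∑ z ∈ (Finset.univ ×ˢ Finset.univ : Finset (Fin N × Fin N)),
          x z.1 * y z.2 * D z.1 z.2 := by
    rw [Finset.sum_product]
  rw [h1, Finset.univ_product_univ,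
    ← Finset.sum_filter_add_sum_filter_not Finset.univ
      (fun z : Fin N × Fin N => z.1 < z.2)]
  have h2 : ∑ z ∈ Finset.univ.filter (fun z : Fin N × Fin N => ¬ z.1 < z.2),
      x z.1 * y z.2 * D z.1 z.2
      = ∑ z ∈ Finset.univ.filter (fun z : Fin N × Fin N => z.2 < z.1),
          x z.1 * y z.2 * D z.1 z.2 := by
    refine (Finset.sum_subset ?_ ?_).symm
    · intro z hz
      simp only [Finset.mem_filter, Finset.mem_univ, true_and] at hz ⊢
      exact not_lt_of_gt hz
    · intro z hz hz'
      simp only [Finset.mem_filter, Finset.mem_univ, true_and] at hz hz'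
      have : z.1 = z.2 := le_antisymm (not_lt.mp hz') (not_lt.mp hz)
      rw [← this, hdiag, mul_zero]
  have h3 : ∑ z ∈ Finset.univ.filter (fun z : Fin N × Fin N => z.2 < z.1),
      x z.1 * y z.2 * D z.1 z.2
      = ∑ z ∈ Finset.univ.filter (fun z : Fin N × Fin N => z.1 < z.2),
          x z.2 * y z.1 * D z.2 z.1 := by
    refine Finset.sum_nbij' (fun z => (z.2, z.1)) (fun z => (z.2, z.1)) ?_ ?_ ?_ ?_ ?_ <;>
      simp
  rw [h2, h3, ← Finset.sum_add_distrib]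
  refine Finset.sum_congr rfl fun z _ => ?_
  rw [hskew z.1 z.2]
  ring

private def rowv {N : ℕ} (z : ℝ) : Fin N → ℝ := fun l => z ^ (l : ℕ)

private def pinNodes {Q : Type*} (T : ℕ) (t : Q → ℝ) (e : Fin 2 → Q) (d : Fin T → Q) :
    Fin (T + 2) → ℝ :=
  fun p =>
    if h : (p : ℕ) < 2 then t (e ⟨p, h⟩)
    else t (d ⟨(p : ℕ) - 2, by have := p.isLt; omega⟩)

private lemma pinNodes_zero {Q : Type*} (T : ℕ) (t : Q → ℝ) (e : Fin 2 → Q) (d : Fin T → Q) :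
    pinNodes T t e d 0 = t (e 0) := by
  simp [pinNodes]

private lemma pinNodes_one {Q : Type*} (T : ℕ) (t : Q → ℝ) (e : Fin 2 → Q) (d : Fin T → Q) :
    pinNodes T t e d 1 = t (e 1) := by
  have h1 : ((1 : Fin (T + 2)) : ℕ) = 1 := rfl
  simp [pinNodes, h1]

private lemma vandermonde_pinNodes {Q : Type*} (T : ℕ) (t : Q → ℝ) (e e' : Fin 2 → Q)
    (d : Fin T → Q) :
    Matrix.vandermonde (pinNodes T t e d)
      = ((Matrix.vandermonde (pinNodes T t e' d)).updateRow 0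
          (rowv (t (e 0)))).updateRow 1 (rowv (t (e 1))) := by
  funext p l
  have h01 : (0 : Fin (T + 2)) ≠ 1 := by
    intro h
    have := congrArg Fin.val h
    simp at this
  by_cases h1 : p = 1
  · subst h1
    simp [Matrix.updateRow_apply, Matrix.vandermonde, pinNodes_one, rowv]
  · by_cases h0 : p = 0
    · subst h0
      simp [Matrix.updateRow_apply, h01, Matrix.vandermonde, pinNodes_zero, rowv]
    · have hv0 : (p : ℕ) ≠ 0 := fun h => h0 (Fin.ext (by simp [h]))
      have hv1 : (p : ℕ) ≠ 1 := fun h => h1 (Fin.ext (by simp [h]))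
      have hge : ¬ (p : ℕ) < 2 := by omega
      simp only [Matrix.updateRow_apply, h0, h1, if_false]
      simp [Matrix.vandermonde, pinNodes, dif_neg hge, show ¬ (p : ℕ) ≤ 1 by omega]

/-- Frankl's theorem (Frankl-Pin sequences): if `M i` are `m`-subsets of an `n`-set `Q`,
`R i` are 2-subsets with `R i ⊆ M i` and `R i ⊄ M j` for `j < i`,
then `ℓ ≤ (n-m+2)(n-m+1)/2`. -/
theorem frankl_pin {Q : Type*} [Fintype Q] [DecidableEq Q] (n m ℓ : ℕ)
    (hn : Fintype.card Q = n) (hm1 : 1 < m) (hmn : m ≤ n)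
    (M R : Fin ℓ → Finset Q)
    (hM : ∀ i, (M i).card = m) (hR : ∀ i, (R i).card = 2)
    (hsub : ∀ i, R i ⊆ M i)
    (hnot : ∀ i j : Fin ℓ, j < i → ¬ R i ⊆ M j) :
    ℓ ≤ (n - m + 2) * (n - m + 1) / 2 := by
  classical
  set T : ℕ := n - m with hT
  -- an injection of `Q` into `ℝ`
  let t : Q → ℝ := fun q => ((Fintype.equivFin Q q : ℕ) : ℝ)
  have ht : Function.Injective t := by
    intro a b hab
    exact (Fintype.equivFin Q).injective (Fin.ext (Nat.cast_injective hab))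
  -- enumerate the pairs
  let e : Fin ℓ → Fin 2 → Q := fun i k => ((Finset.equivFinOfCardEq (hR i)).symm k : Q)
  have he_mem : ∀ i k, e i k ∈ R i := fun i k => ((Finset.equivFinOfCardEq (hR i)).symm k).2
  have he_inj : ∀ i, Function.Injective (e i) := fun i a b hab =>
    (Finset.equivFinOfCardEq (hR i)).symm.injective (Subtype.ext hab)
  have he_surj : ∀ i x, x ∈ R i → ∃ k, e i k = x := fun i x hx =>
    ⟨Finset.equivFinOfCardEq (hR i) ⟨x, hx⟩, by simp [e]⟩
  -- enumerate the complements
  have hDcard : ∀ j, ((M j)ᶜ : Finset Q).card = T := by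
    intro j
    rw [Finset.card_compl, hM, hn]
  let d : Fin ℓ → Fin T → Q := fun j k => ((Finset.equivFinOfCardEq (hDcard j)).symm k : Q)
  have hd_mem : ∀ j k, d j k ∈ (M j)ᶜ :=
    fun j k => ((Finset.equivFinOfCardEq (hDcard j)).symm k).2
  have hd_inj : ∀ j, Function.Injective (d j) := fun j a b hab =>
    (Finset.equivFinOfCardEq (hDcard j)).symm.injective (Subtype.ext hab)
  have hd_surj : ∀ j x, x ∈ (M j)ᶜ → ∃ k, d j k = x := fun j x hx =>
    ⟨Finset.equivFinOfCardEq (hDcard j) ⟨x, hx⟩, by simp [d]⟩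
  -- the pairing matrix
  let X : Fin ℓ → Fin ℓ → ℝ := fun i j =>
    (Matrix.vandermonde (pinNodes T t (e i) (d j))).det
  have h01 : (0 : Fin (T + 2)) ≠ 1 := by
    intro h
    have := congrArg Fin.val h
    simp at this
  -- diagonal entries are nonzero
  have hXdiag : ∀ i, X i i ≠ 0 := by
    intro i
    show (Matrix.vandermonde (pinNodes T t (e i) (d i))).det ≠ 0
    rw [Matrix.det_vandermonde_ne_zero_iff]
    intro p q hpq
    by_cases hp : (p : ℕ) < 2 <;> by_cases hq : (q : ℕ) < 2
    · rw [show pinNodes T t (e i) (d i) p = t (e i ⟨p, hp⟩) from dif_pos hp,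
        show pinNodes T t (e i) (d i) q = t (e i ⟨q, hq⟩) from dif_pos hq] at hpq
      have := he_inj i (ht hpq)
      have := congrArg Fin.val this
      exact Fin.ext this
    · rw [show pinNodes T t (e i) (d i) p = t (e i ⟨p, hp⟩) from dif_pos hp,
        show pinNodes T t (e i) (d i) q = t (d i ⟨(q : ℕ) - 2, by have := q.isLt; omega⟩)
          from dif_neg hq] at hpq
      have h1 := ht hpq
      have h2 := hsub i (he_mem i ⟨p, hp⟩)
      have h3 := Finset.mem_compl.mp (hd_mem i ⟨(q : ℕ) - 2, by have := q.isLt; omega⟩)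
      rw [← h1] at h3
      exact absurd h2 h3
    · rw [show pinNodes T t (e i) (d i) p = t (d i ⟨(p : ℕ) - 2, by have := p.isLt; omega⟩)
          from dif_neg hp,
        show pinNodes T t (e i) (d i) q = t (e i ⟨q, hq⟩) from dif_pos hq] at hpq
      have h1 := ht hpq
      have h2 := hsub i (he_mem i ⟨q, hq⟩)
      have h3 := Finset.mem_compl.mp (hd_mem i ⟨(p : ℕ) - 2, by have := p.isLt; omega⟩)
      rw [h1] at h3
      exact absurd h2 h3
    · rw [show pinNodes T t (e i) (d i) p = t (d i ⟨(p : ℕ) - 2, by have := p.isLt; omega⟩)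
          from dif_neg hp,
        show pinNodes T t (e i) (d i) q = t (d i ⟨(q : ℕ) - 2, by have := q.isLt; omega⟩)
          from dif_neg hq] at hpq
      have := hd_inj i (ht hpq)
      have := congrArg Fin.val this
      simp only [] at this
      exact Fin.ext (by omega)
  -- strictly lower entries vanish
  have hXlt : ∀ i j, j < i → X i j = 0 := by
    intro i j hji
    obtain ⟨x, hxR, hxM⟩ := Finset.not_subset.mp (hnot i j hji)
    obtain ⟨k, hk⟩ := he_surj i x hxR
    obtain ⟨k', hk'⟩ := hd_surj j x (Finset.mem_compl.mpr hxM)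
    show (Matrix.vandermonde (pinNodes T t (e i) (d j))).det = 0
    refine Matrix.det_zero_of_row_eq
      (i := (⟨(k : ℕ), by have := k.isLt; omega⟩ : Fin (T + 2)))
      (j := (⟨(k' : ℕ) + 2, by have := k'.isLt; omega⟩ : Fin (T + 2))) ?_ ?_
    · intro h
      have := congrArg Fin.val h
      simp only [] at this
      have := k.isLt
      omega
    · funext l
      have hv1 : pinNodes T t (e i) (d j) ⟨(k : ℕ), by have := k.isLt; omega⟩ = t x := by
        rw [show pinNodes T t (e i) (d j) ⟨(k : ℕ), by have := k.isLt; omega⟩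
            = t (e i ⟨(k : ℕ), k.isLt⟩) from dif_pos k.isLt]
        rw [Fin.eta, hk]
      have hv2 : pinNodes T t (e i) (d j) ⟨(k' : ℕ) + 2, by have := k'.isLt; omega⟩ = t x := by
        rw [show pinNodes T t (e i) (d j) ⟨(k' : ℕ) + 2, by have := k'.isLt; omega⟩
            = t (d j ⟨(k' : ℕ) + 2 - 2, by have := k'.isLt; omega⟩) from dif_neg (by show ¬ ((k' : ℕ) + 2) < 2; omega)]
        have : ((⟨(k' : ℕ) + 2 - 2, by have := k'.isLt; omega⟩ : Fin T)) = k' :=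
          Fin.ext (by simp)
        rw [this, hk']
      show pinNodes T t (e i) (d j) _ ^ (l : ℕ) = pinNodes T t (e i) (d j) _ ^ (l : ℕ)
      rw [hv1, hv2]
  -- base matrix and minors
  have hQne : Nonempty Q := by
    rw [← Fintype.card_pos_iff, hn]
    omega
  obtain ⟨q0⟩ := hQne
  let e0 : Fin 2 → Q := fun _ => q0
  let B : Fin ℓ → Matrix (Fin (T + 2)) (Fin (T + 2)) ℝ := fun j =>
    Matrix.vandermonde (pinNodes T t e0 (d j))
  let Dd : Fin ℓ → Fin (T + 2) → Fin (T + 2) → ℝ := fun j p q =>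
    (((B j).updateRow 0 (Pi.single p 1)).updateRow 1 (Pi.single q 1)).det
  -- the index type of "coordinates"
  let S := {z : Fin (T + 2) × Fin (T + 2) // z.1 < z.2}
  let u : Fin ℓ → S → ℝ := fun i z =>
    rowv (t (e i 0)) z.1.1 * rowv (t (e i 1)) z.1.2
      - rowv (t (e i 0)) z.1.2 * rowv (t (e i 1)) z.1.1
  have hsub' : ∀ f : Fin (T + 2) × Fin (T + 2) → ℝ,
      ∑ z ∈ Finset.univ.filter (fun z : Fin (T + 2) × Fin (T + 2) => z.1 < z.2), f z
        = ∑ z : S, f z.1 :=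
    fun f => Finset.sum_subtype _ (fun z => by simp) f
  have hpair : ∀ i j, ∑ z : S, u i z * Dd j z.1.1 z.1.2 = X i j := by
    intro i j
    have hexp : X i j
        = (((B j).updateRow 0 (rowv (t (e i 0)))).updateRow 1 (rowv (t (e i 1)))).det := by
      show (Matrix.vandermonde (pinNodes T t (e i) (d j))).det = _
      rw [vandermonde_pinNodes T t (e i) e0 (d j)]
    rw [hexp, det_two_row_expand (B j) h01,
      sum_fold_antisym (Dd j) (fun p => det_two_row_diag (B j) h01 _)
        (fun p q => det_two_row_swap (B j) h01 _ _)]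
    rw [hsub']
  -- linear independence of the rows `u i`
  have hLI : LinearIndependent ℝ u := by
    rw [Fintype.linearIndependent_iff]
    intro g hg
    by_contra hcon
    push_neg at hcon
    obtain ⟨i₁, hi₁⟩ := hcon
    set F := Finset.univ.filter (fun i => g i ≠ 0) with hF
    have hFne : F.Nonempty := ⟨i₁, by simp [hF, hi₁]⟩
    set i₀ := F.min' hFne with hi₀
    have hi₀F : i₀ ∈ F := F.min'_mem hFne
    have hgi₀ : g i₀ ≠ 0 := by
      have := hi₀F
      rw [hF, Finset.mem_filter] at this
      exact this.2
    have hsum0 : ∀ z : S, ∑ i, g i * u i z = 0 := by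
      intro z
      have h := congrFun hg z
      simpa [Finset.sum_apply] using h
    have h0 : ∑ i, g i * X i i₀ = 0 := by
      have h1 : ∑ i, g i * X i i₀ = ∑ i, ∑ z : S, g i * (u i z * Dd i₀ z.1.1 z.1.2) := by
        refine Finset.sum_congr rfl fun i _ => ?_
        rw [← hpair i i₀, Finset.mul_sum]
      rw [h1, Finset.sum_comm]
      refine Finset.sum_eq_zero fun z _ => ?_
      have h2 : ∑ i, g i * (u i z * Dd i₀ z.1.1 z.1.2)
          = (∑ i, g i * u i z) * Dd i₀ z.1.1 z.1.2 := by
        rw [Finset.sum_mul]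
        exact Finset.sum_congr rfl fun i _ => by ring
      rw [h2, hsum0 z, zero_mul]
    have h3 : ∑ i, g i * X i i₀ = g i₀ * X i₀ i₀ := by
      refine Finset.sum_eq_single i₀ ?_ (by simp)
      intro i _ hne
      rcases lt_or_gt_of_ne hne with hlt | hgt
      · have hiF : i ∉ F := fun hiF => absurd (F.min'_le i hiF) (not_le.mpr hlt)
        have : g i = 0 := by
          by_contra h
          exact hiF (by simp [hF, h])
        rw [this, zero_mul]
      · rw [hXlt i i₀ hgt, mul_zero]
    rw [h3] at h0
    exact hgi₀ ((mul_eq_zero.mp h0).resolve_right (hXdiag i₀))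
  -- counting
  have hcard1 : ℓ ≤ Fintype.card S := by
    have h := hLI.fintype_card_le_finrank
    rwa [Module.finrank_pi, Fintype.card_fin] at h
  have hcard2 : Fintype.card S ≤ (T + 2).choose 2 := by
    have hinj : Fintype.card S ≤ Fintype.card {s : Finset (Fin (T + 2)) // s.card = 2} := by
      refine Fintype.card_le_of_injective
        (fun z => ⟨{z.1.1, z.1.2}, Finset.card_pair (ne_of_lt z.2)⟩) ?_
      intro z w hzw
      have hset : ({z.1.1, z.1.2} : Finset (Fin (T + 2))) = {w.1.1, w.1.2} :=
        congrArg Subtype.val hzw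
      have hz := z.2
      have hw := w.2
      have h1 : z.1.1 = w.1.1 ∨ z.1.1 = w.1.2 := by
        have : z.1.1 ∈ ({w.1.1, w.1.2} : Finset (Fin (T + 2))) := by
          rw [← hset]; simp
        simpa using this
      have h2 : z.1.2 = w.1.1 ∨ z.1.2 = w.1.2 := by
        have : z.1.2 ∈ ({w.1.1, w.1.2} : Finset (Fin (T + 2))) := by
          rw [← hset]; simp
        simpa using this
      have h4 : w.1.1 = z.1.1 ∨ w.1.1 = z.1.2 := by
        have : w.1.1 ∈ ({z.1.1, z.1.2} : Finset (Fin (T + 2))) := by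
          rw [hset]; simp
        simpa using this
      have hzv := Fin.lt_iff_val_lt_val.mp hz
      have hwv := Fin.lt_iff_val_lt_val.mp hw
      have h1v : (z.1.1 : ℕ) = w.1.1 ∨ (z.1.1 : ℕ) = w.1.2 :=
        h1.imp (congrArg Fin.val) (congrArg Fin.val)
      have h2v : (z.1.2 : ℕ) = w.1.1 ∨ (z.1.2 : ℕ) = w.1.2 :=
        h2.imp (congrArg Fin.val) (congrArg Fin.val)
      have h4v : (w.1.1 : ℕ) = z.1.1 ∨ (w.1.1 : ℕ) = z.1.2 :=
        h4.imp (congrArg Fin.val) (congrArg Fin.val)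
      have hfst : (z.1.1 : ℕ) = w.1.1 := by omega
      have hsnd : (z.1.2 : ℕ) = w.1.2 := by omega
      exact Subtype.ext (Prod.ext (Fin.ext hfst) (Fin.ext hsnd))
    rwa [Fintype.card_finset_len, Fintype.card_fin] at hinj
  have hfin := hcard1.trans hcard2
  rw [Nat.choose_two_right] at hfin
  have h5 : T + 2 - 1 = T + 1 := by omega
  rw [h5] at hfin
  exact hfin
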